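/- Let ε₁ ∈ [0, 1/2) and set a = exp(-2t(1/2-ε₁)²). If t ≥ (log 2)/(2(1/2-ε₁)²), then a ≤ 1/2, and consequently for independent {0,1}-valued random variables Z₁,…,Z_t each with mean 1-ε₁, the probability that (1/t)·Σⱼ Zⱼ ≥ 1/2 is at least exp(-a(a+1)). -/

import Mathlib

open MeasureTheory ProbabilityTheory

/-- For `0 ≤ x`, `1 + x + x^2/2 ≤ exp x`. -/
lemma aux_quad_le_exp {x : ℝ} (hx : 0 ≤ x) : 1 + x + x ^ 2 / 2 ≤ Real.exp x := by
  have h := Real.sum_le_exp_of_nonneg hx 3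
  rw [Finset.sum_range_succ, Finset.sum_range_succ, Finset.sum_range_succ,
    Finset.sum_range_zero] at h
  norm_num at h
  linarith

/-- For `0 < a ≤ 1/2`, `exp (-(a*(a+1))) ≤ 1 - a`. -/
lemma aux_exp_le_one_sub {a : ℝ} (h0 : 0 < a) (h2 : a ≤ 1/2) :
    Real.exp (-(a * (a + 1))) ≤ 1 - a := by
  have hx : (0:ℝ) ≤ a * (a + 1) := by nlinarith
  have h1 : 1 + a * (a+1) + (a * (a+1)) ^ 2 / 2 ≤ Real.exp (a * (a + 1)) :=
    aux_quad_le_exp hx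
  have h5 : 0 ≤ 1 - a - a^2 - a^3 := by
    nlinarith [mul_le_mul_of_nonneg_left h2 h0.le,
      mul_le_mul_of_nonneg_left h2 (sq_nonneg a), sq_nonneg a]
  have h3 : 1 ≤ (1 - a) * (1 + a * (a+1) + (a * (a+1)) ^ 2 / 2) := by
    nlinarith [mul_nonneg (sq_nonneg a) h5]
  rw [Real.exp_neg, inv_eq_one_div, div_le_iff₀ (Real.exp_pos _)]
  have h4 : (1 - a) * (1 + a * (a+1) + (a * (a+1)) ^ 2 / 2)
      ≤ (1 - a) * Real.exp (a * (a+1)) :=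
    mul_le_mul_of_nonneg_left h1 (by linarith)
  linarith

/-- If `t ≥ log 2 / (2(1/2-ε₁)²)`, then `a = exp(-2t(1/2-ε₁)²) ≤ 1/2`, and the
majority vote of independent `{0,1}`-valued variables with mean `1-ε₁` reaches
at least `1/2` with probability at least `exp(-a(a+1))`. -/
theorem stmt2 {Ω : Type*} [MeasureSpace Ω] [IsProbabilityMeasure (ℙ : Measure Ω)]
    (ε₁ : ℝ) (hε : ε₁ ∈ Set.Ico (0 : ℝ) (1/2))
    (t : ℕ) (ht : (t : ℝ) ≥ Real.log 2 / (2 * (1/2 - ε₁)^2))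
    (a : ℝ) (ha : a = Real.exp (-2 * t * (1/2 - ε₁)^2))
    (Z : Fin t → Ω → ℝ)
    (hmeas : ∀ j, Measurable (Z j))
    (hind : iIndepFun Z ℙ)
    (hrange : ∀ j ω, Z j ω = 0 ∨ Z j ω = 1)
    (hmean : ∀ j, ∫ ω, Z j ω ∂ℙ = 1 - ε₁) :
    a ≤ 1/2 ∧
    (ℙ {ω | (1/2 : ℝ) ≤ (1 / (t : ℝ)) * ∑ j, Z j ω}).toReal
      ≥ Real.exp (-(a * (a + 1))) := by
  obtain ⟨hε0, hε2⟩ := hε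
  set δ : ℝ := 1/2 - ε₁ with hδ
  have hδpos : 0 < δ := by simp only [hδ]; linarith
  -- a ≤ 1/2
  have ha12 : a ≤ 1/2 := by
    rw [ha]
    have h1 : Real.log 2 ≤ 2 * t * δ^2 := by
      rw [ge_iff_le, div_le_iff₀ (by positivity)] at ht
      nlinarith
    calc Real.exp (-2 * t * δ^2) ≤ Real.exp (-Real.log 2) := by
          apply Real.exp_le_exp.2; linarith
      _ = 1/2 := by
          rw [Real.exp_neg, Real.exp_log (by norm_num : (0:ℝ) < 2)]; norm_num
  have hapos : 0 < a := ha ▸ Real.exp_pos _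
  refine ⟨ha12, ?_⟩
  -- t is positive
  have htpos : 0 < (t : ℝ) := by
    have : (0:ℝ) < Real.log 2 / (2 * δ^2) :=
      div_pos (Real.log_pos (by norm_num)) (by positivity)
    linarith
  -- tilting parameter
  set L : ℝ := if ε₁ = 0 then 1 else Real.log ((1 - ε₁)/ε₁) with hLdef
  have hL : 0 ≤ L := by
    rw [hLdef]
    split_ifs with h
    · norm_num
    · have hq : 0 < ε₁ := lt_of_le_of_ne hε0 (Ne.symm h)
      apply Real.log_nonneg
      rw [le_div_iff₀ hq]; linarith
  set r : ℝ := ε₁ + (1 - ε₁) * Real.exp (-L) with hr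
  have hrnn : 0 ≤ r := by
    have := Real.exp_pos (-L); rw [hr]; nlinarith
  -- key per-variable bound
  have key : Real.exp (L/2) * r ≤ Real.exp (-2 * δ^2) := by
    rcases eq_or_lt_of_le hε0 with h0 | h0
    · have hε₁ : ε₁ = 0 := h0.symm
      have hL1 : L = 1 := by rw [hLdef, if_pos hε₁]
      rw [hr, hε₁, hL1]
      rw [show (0:ℝ) + (1 - 0) * Real.exp (-1) = Real.exp (-1) by ring,
        ← Real.exp_add]
      apply Real.exp_le_exp.2
      rw [hδ, hε₁]; norm_num
    · have hε₁ : ε₁ ≠ 0 := ne_of_gt h0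
      have hLlog : L = Real.log ((1 - ε₁)/ε₁) := by rw [hLdef, if_neg hε₁]
      have hp : 0 < 1 - ε₁ := by linarith
      have hexpL : Real.exp L = (1 - ε₁)/ε₁ := by
        rw [hLlog, Real.exp_log (by positivity)]
      have hexpnegL : Real.exp (-L) = ε₁/(1 - ε₁) := by
        rw [Real.exp_neg, hexpL]
        rw [inv_div]
      have hrval : r = 2 * ε₁ := by
        rw [hr, hexpnegL]
        field_simp
        ring
      -- compare squares
      have hsq : (Real.exp (L/2) * r)^2 ≤ (Real.exp (-2 * δ^2))^2 := by
        have e1 : (Real.exp (L/2))^2 = Real.exp L := by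
          rw [← Real.exp_nat_mul]; apply congrArg; push_cast; ring
        have e2 : (Real.exp (-2 * δ^2))^2 = Real.exp (-4 * δ^2) := by
          rw [← Real.exp_nat_mul]; apply congrArg; push_cast; ring
        rw [mul_pow, e1, e2, hexpL, hrval]
        have h4 : ((1 - ε₁)/ε₁) * (2 * ε₁)^2 = 4 * ε₁ * (1 - ε₁) := by
          field_simp; ring
        rw [h4]
        have : 4 * ε₁ * (1 - ε₁) = 1 - 4 * δ^2 := by rw [hδ]; ring
        rw [this]
        have := Real.add_one_le_exp (-4 * δ^2)
        linarith
      have h1 : 0 ≤ Real.exp (L/2) * r := by positivity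
      exact (pow_le_pow_iff_left₀ h1 (Real.exp_pos _).le (two_ne_zero)).1 hsq
  -- integrability of each Z j
  have hZint : ∀ j, Integrable (Z j) ℙ := by
    intro j
    refine (integrable_const (1:ℝ)).mono' (hmeas j).aestronglyMeasurable ?_
    filter_upwards with ω
    rcases hrange j ω with h | h <;> rw [h] <;> norm_num
  -- mgf of each Z j at -L
  have hmgf : ∀ j, mgf (Z j) ℙ (-L) = r := by
    intro j
    have hpt : ∀ ω, Real.exp (-L * Z j ω) = 1 + (Real.exp (-L) - 1) * Z j ω := by
      intro ω
      rcases hrange j ω with h | h <;> rw [h] <;> simp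
    rw [mgf]
    calc ∫ ω, Real.exp (-L * Z j ω) ∂ℙ
        = ∫ ω, (1 + (Real.exp (-L) - 1) * Z j ω) ∂ℙ := by
          exact integral_congr_ae (Filter.Eventually.of_forall hpt)
      _ = 1 + (Real.exp (-L) - 1) * (1 - ε₁) := by
          rw [integral_add (integrable_const 1) ((hZint j).const_mul _),
            integral_const, integral_const_mul, hmean j]
          simp
      _ = r := by rw [hr]; ring
  -- integrability of exp(-L * sum)
  have hsum_meas : Measurable (fun ω => ∑ j, Z j ω) :=
    Finset.measurable_sum _ fun j _ => hmeas j
  have hSint : Integrable (fun ω => Real.exp (-L * (∑ j, Z j) ω)) ℙ := by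
    have hm2 : Measurable (fun ω => Real.exp (-L * (∑ j, Z j) ω)) := by
      simp only [Finset.sum_apply]
      exact (hsum_meas.const_mul (-L)).exp
    refine (integrable_const (1:ℝ)).mono' hm2.aestronglyMeasurable ?_
    filter_upwards with ω
    rw [Real.norm_eq_abs, abs_of_pos (Real.exp_pos _), ← Real.exp_zero,
      Real.exp_le_exp]
    simp only [Finset.sum_apply]
    have hS : 0 ≤ ∑ j, Z j ω := by
      apply Finset.sum_nonneg
      intro j _
      rcases hrange j ω with h | h <;> rw [h] <;> norm_num
    nlinarith
  -- Chernoff bound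
  have chern := measure_le_le_exp_mul_mgf (X := ∑ j, Z j) (μ := ℙ)
    (t := -L) ((t : ℝ)/2) (neg_nonpos.2 hL) hSint
  have hmgfsum : mgf (∑ j, Z j) ℙ (-L) = r ^ t := by
    rw [show (∑ j, Z j) = ∑ j ∈ Finset.univ, Z j from rfl,
      hind.mgf_sum hmeas Finset.univ]
    rw [Finset.prod_congr rfl (fun j _ => hmgf j), Finset.prod_const,
      Finset.card_univ, Fintype.card_fin]
  have hB : (ℙ {ω | (∑ j, Z j) ω ≤ (t : ℝ)/2}).toReal ≤ a := by
    refine chern.trans ?_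
    rw [hmgfsum, neg_neg]
    have e1 : Real.exp (L * ((t:ℝ)/2)) = (Real.exp (L/2)) ^ t := by
      rw [← Real.exp_nat_mul]; apply congrArg; ring
    rw [e1, ← mul_pow]
    calc (Real.exp (L/2) * r) ^ t ≤ (Real.exp (-2 * δ^2)) ^ t := by
          exact pow_le_pow_left₀ (by positivity) key t
      _ = a := by
          rw [← Real.exp_nat_mul, ha]; apply congrArg; push_cast; ring
  -- complement argument
  set B : Set Ω := {ω | (∑ j, Z j) ω ≤ (t : ℝ)/2} with hBdef
  have hBmeas : MeasurableSet B := by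
    have : B = {ω | (fun ω => ∑ j, Z j ω) ω ≤ (t:ℝ)/2} := by
      ext ω; simp [hBdef]
    rw [this]
    exact measurableSet_le hsum_meas measurable_const
  have hsub : Bᶜ ⊆ {ω | (1/2 : ℝ) ≤ (1 / (t : ℝ)) * ∑ j, Z j ω} := by
    intro ω hω
    simp only [hBdef, Set.mem_compl_iff, Set.mem_setOf_eq, not_le,
      Finset.sum_apply] at hω ⊢
    have heq : (1:ℝ)/(t:ℝ) * ∑ j, Z j ω = (∑ j, Z j ω)/(t:ℝ) := by ring
    rw [heq, le_div_iff₀ htpos]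
    linarith
  have hcompl : (ℙ Bᶜ).toReal = 1 - (ℙ B).toReal := by
    rw [prob_compl_eq_one_sub hBmeas,
      ENNReal.toReal_sub_of_le prob_le_one ENNReal.one_ne_top, ENNReal.toReal_one]
  calc Real.exp (-(a * (a + 1))) ≤ 1 - a := aux_exp_le_one_sub hapos ha12
    _ ≤ 1 - (ℙ B).toReal := by linarith [hB]
    _ = (ℙ Bᶜ).toReal := hcompl.symm
    _ ≤ (ℙ {ω | (1/2 : ℝ) ≤ (1 / (t : ℝ)) * ∑ j, Z j ω}).toReal :=
        ENNReal.toReal_mono (measure_ne_top _ _) (measure_mono hsub)
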